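/- Let λ, τ, ε > 0 and κ, M > 0 be real constants, let μ̂_X, μ̂_U, μ̂_D > 0, and let σ_u, σ_d, γ, α : [0,∞) → [0,∞) be class-K∞ functions (continuous, strictly increasing, vanishing at 0, and tending to ∞ at ∞). For N ∈ ℕ and μ > 0 define ρ(N,μ) = 1 − max{μ/M, 2μ(N+1)/(κτ)} and Θ(N,μ) = (1 − ρ(N,μ))·M + (1 + ρ(N,μ))·κτ/(N+1) + μ. Then there exist real numbers μ_x, μ_u, μ_d, θ_d > 0 and N ∈ ℕ such that: (i) max{σ_u(μ_u), σ_d(θ_d)}/λ + γ(μ_x)/(1 − e^{−λτ}) ≤ α(ε); (ii) μ_x ≤ μ̂_X; (iii) μ_u ≤ μ̂_U; (iv) μ_d ≤ μ̂_D; and (v) Θ(N, μ_d) ≤ θ_d. -/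

import Mathlib

/-- A class-K∞ function: continuous, strictly increasing, vanishing at 0,
nonnegative, and tending to ∞ at ∞ (as a function on [0, ∞)). -/
def ClassKInfty (f : ℝ → ℝ) : Prop :=
  ContinuousOn f (Set.Ici 0) ∧ StrictMonoOn f (Set.Ici 0) ∧ f 0 = 0 ∧
    (∀ x ∈ Set.Ici (0 : ℝ), 0 ≤ f x) ∧ Filter.Tendsto f Filter.atTop Filter.atTop

lemma small_of_ClassKInfty {f : ℝ → ℝ} (hf : ClassKInfty f) {c : ℝ} (hc : 0 < c) :
    ∃ δ > 0, ∀ x, 0 ≤ x → x ≤ δ → f x ≤ c := by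
  obtain ⟨hcont, _, hf0, _, _⟩ := hf
  have h := hcont 0 (Set.self_mem_Ici)
  rw [ContinuousWithinAt, hf0, Metric.tendsto_nhdsWithin_nhds] at h
  obtain ⟨δ, hδ, hδ'⟩ := h c hc
  refine ⟨δ / 2, by positivity, fun x hx hx' => ?_⟩
  have hd : dist x 0 < δ := by
    rw [Real.dist_eq, sub_zero, abs_of_nonneg hx]; linarith
  have := hδ' (show x ∈ Set.Ici 0 from hx) hd
  rw [Real.dist_eq, sub_zero] at this
  calc f x ≤ |f x| := le_abs_self _
    _ ≤ c := le_of_lt this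

set_option maxHeartbeats 1000000 in
/-- Proposition 4.2: existence of quantization parameters satisfying the coupled
inequalities (23)–(27). -/
theorem stmt_11 (lam τ ε κ M : ℝ) (hlam : 0 < lam) (hτ : 0 < τ) (hε : 0 < ε)
    (hκ : 0 < κ) (hM : 0 < M)
    (μX μU μD : ℝ) (hμX : 0 < μX) (hμU : 0 < μU) (hμD : 0 < μD)
    (σu σd γ α : ℝ → ℝ)
    (hσu : ClassKInfty σu) (hσd : ClassKInfty σd)
    (hγ : ClassKInfty γ) (hα : ClassKInfty α)
    (ρ Θ : ℕ → ℝ → ℝ)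
    (hρ : ∀ (N : ℕ) (μ : ℝ), ρ N μ = 1 - max (μ / M) (2 * μ * (N + 1) / (κ * τ)))
    (hΘ : ∀ (N : ℕ) (μ : ℝ),
      Θ N μ = (1 - ρ N μ) * M + (1 + ρ N μ) * (κ * τ / (N + 1)) + μ) :
    ∃ (μx μu μd θd : ℝ) (N : ℕ),
      0 < μx ∧ 0 < μu ∧ 0 < μd ∧ 0 < θd ∧
      max (σu μu) (σd θd) / lam + γ μx / (1 - Real.exp (-lam * τ)) ≤ α ε ∧
      μx ≤ μX ∧ μu ≤ μU ∧ μd ≤ μD ∧ Θ N μd ≤ θd := by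
  set E := Real.exp (-lam * τ) with hEdef
  have hE1 : E < 1 := by
    rw [hEdef]
    exact Real.exp_lt_one_iff.mpr (by nlinarith)
  have hE0 : (0:ℝ) < 1 - E := by linarith
  set B := α ε with hBdef
  have hB : 0 < B := by
    obtain ⟨_, hmono, hα0, _, _⟩ := hα
    have := hmono (Set.self_mem_Ici) (le_of_lt hε) hε
    rw [hα0] at this; exact this
  obtain ⟨δu, hδu, hu⟩ := small_of_ClassKInfty hσu (show (0:ℝ) < lam * B / 2 by positivity)
  obtain ⟨δd, hδd, hd⟩ := small_of_ClassKInfty hσd (show (0:ℝ) < lam * B / 2 by positivity)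
  obtain ⟨δγ, hδγ, hg⟩ := small_of_ClassKInfty hγ (show (0:ℝ) < (1 - E) * B / 2 by positivity)
  set μu := min δu μU with hμudef
  set μx := min δγ μX with hμxdef
  set t := min δd 1 with htdef
  have ht : 0 < t := lt_min hδd one_pos
  obtain ⟨N, hNge⟩ : ∃ N : ℕ, 4 * κ * τ / t ≤ (N : ℝ) + 1 :=
    ⟨⌈4 * κ * τ / t⌉₊, le_trans (Nat.le_ceil _) (by push_cast; linarith)⟩
  have hN1 : (0:ℝ) < (N:ℝ) + 1 := by positivity
  obtain ⟨μd, hμd0, hμdD, hμd6, hμd12⟩ :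
      ∃ μd : ℝ, 0 < μd ∧ μd ≤ μD ∧ μd ≤ t / 6 ∧
        μd * (12 * ((N:ℝ) + 1) * M) ≤ t * (κ * τ) := by
    refine ⟨min μD (min (t / 6) (t * (κ * τ) / (12 * ((N:ℝ) + 1) * M))),
      lt_min hμD (lt_min (by positivity) (by positivity)), min_le_left _ _,
      le_trans (min_le_right _ _) (min_le_left _ _), ?_⟩
    have h : (min μD (min (t / 6) (t * (κ * τ) / (12 * ((N:ℝ) + 1) * M))))
        ≤ t * (κ * τ) / (12 * ((N:ℝ) + 1) * M) :=
      (min_le_right _ _).trans (min_le_right _ _)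
    rwa [le_div_iff₀ (by positivity)] at h
  refine ⟨μx, μu, μd, t, N, lt_min hδγ hμX, lt_min hδu hμU, hμd0, ht, ?_, min_le_right _ _,
    min_le_right _ _, hμdD, ?_⟩
  · -- main epsilon inequality
    have h1 : σu μu ≤ lam * B / 2 :=
      hu μu (le_of_lt (lt_min hδu hμU)) (min_le_left _ _)
    have h2 : σd t ≤ lam * B / 2 :=
      hd t (le_of_lt ht) (min_le_left _ _)
    have h3 : γ μx ≤ (1 - E) * B / 2 :=
      hg μx (le_of_lt (lt_min hδγ hμX)) (min_le_left _ _)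
    have hmax : max (σu μu) (σd t) ≤ lam * B / 2 := max_le h1 h2
    have hA : max (σu μu) (σd t) / lam ≤ B / 2 := by
      rw [div_le_iff₀ hlam]; nlinarith
    have hC : γ μx / (1 - E) ≤ B / 2 := by
      rw [div_le_iff₀ hE0]; nlinarith
    linarith
  · -- Θ N μd ≤ t
    rw [hΘ, hρ]
    set m := max (μd / M) (2 * μd * ((N:ℝ) + 1) / (κ * τ)) with hmdef
    have hm0 : 0 ≤ m := le_trans (by positivity) (le_max_left _ _)
    have hq : 0 < κ * τ / ((N:ℝ) + 1) := by positivity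
    have hmM : m * M ≤ t / 6 := by
      have hmle : m ≤ t / (6 * M) := by
        apply max_le
        · rw [div_le_div_iff₀ hM (by positivity)]; nlinarith
        · rw [div_le_div_iff₀ (by positivity) (by positivity)]
          nlinarith
      calc m * M ≤ t / (6 * M) * M := mul_le_mul_of_nonneg_right hmle (le_of_lt hM)
        _ = t / 6 := by field_simp
    have hq4 : κ * τ / ((N:ℝ) + 1) ≤ t / 4 := by
      rw [div_le_div_iff₀ hN1 (by norm_num)]
      rw [div_le_iff₀ ht] at hNge
      linarith [mul_comm t ((N:ℝ) + 1)]
    have hterm2 : (1 + (1 - m)) * (κ * τ / ((N:ℝ) + 1)) ≤ t / 2 := by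
      calc (1 + (1 - m)) * (κ * τ / ((N:ℝ) + 1)) ≤ 2 * (κ * τ / ((N:ℝ) + 1)) :=
            mul_le_mul_of_nonneg_right (by linarith) hq.le
        _ ≤ t / 2 := by linarith
    have hrw : (1 - (1 - m)) * M + (1 + (1 - m)) * (κ * τ / ((N:ℝ) + 1)) + μd
        = m * M + (1 + (1 - m)) * (κ * τ / ((N:ℝ) + 1)) + μd := by ring
    rw [hrw]
    linarith
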